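/- Let C be a 3×3 signed permutation matrix, let S₁, S₂ be 3×3 diagonal matrices with positive diagonal entries, and let Λ be any 3×3 diagonal matrix with positive diagonal entries. Then Cᵀ Λ C is a diagonal matrix with positive diagonal entries, and S₁ C S₂⁻¹ = (Λ S₁) C ((Cᵀ Λ C) S₂)⁻¹. (Hence when the gyroscopes' axes are pairwise parallel, the factorization of A into scale factors and a rotation admits a three-parameter family of solutions, and only the pairwise ratios of the scale factors are determined.) -/

import Mathlib

/-- A signed permutation matrix: exactly one nonzero entry in each row and each column,
each entry being `0`, `1` or `-1`. -/
def IsSignedPerm (C : Matrix (Fin 3) (Fin 3) ℝ) : Prop :=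
  (∀ i, ∃! j, C i j ≠ 0) ∧ (∀ j, ∃! i, C i j ≠ 0) ∧
  (∀ i j, C i j = 0 ∨ C i j = 1 ∨ C i j = -1)

/-- for a signed permutation matrix `C`, positive diagonal `S₁, S₂, Λ`,
the matrix `Cᵀ Λ C` is again positive diagonal and
`S₁ C S₂⁻¹ = (Λ S₁) C ((Cᵀ Λ C) S₂)⁻¹`. -/
theorem stmt10 (C : Matrix (Fin 3) (Fin 3) ℝ) (hC : IsSignedPerm C)
    (s₁ s₂ l : Fin 3 → ℝ)
    (h₁ : ∀ i, 0 < s₁ i) (h₂ : ∀ i, 0 < s₂ i) (hl : ∀ i, 0 < l i) :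
    (∃ d : Fin 3 → ℝ, (∀ i, 0 < d i) ∧
        C.transpose * Matrix.diagonal l * C = Matrix.diagonal d) ∧
    Matrix.diagonal s₁ * C * (Matrix.diagonal s₂)⁻¹ =
      (Matrix.diagonal l * Matrix.diagonal s₁) * C *
        ((C.transpose * Matrix.diagonal l * C) * Matrix.diagonal s₂)⁻¹ := by
  obtain ⟨hrow, hcol, hval⟩ := hC
  choose σ hσ using hrow
  have hσne : ∀ i, C i (σ i) ≠ 0 := fun i => (hσ i).1
  have hzero : ∀ i j, j ≠ σ i → C i j = 0 := by
    intro i j h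
    by_contra hne
    exact h ((hσ i).2 j hne)
  have hinj : Function.Injective σ := by
    intro i i' h
    obtain ⟨k, hk, hku⟩ := hcol (σ i)
    have h1 := hku i (hσne i)
    have h2 := hku i' (h ▸ hσne i')
    rw [h1, h2]
  have hbij : Function.Bijective σ := Finite.injective_iff_bijective.mp hinj
  set eσ := Equiv.ofBijective σ hbij with heσ
  have happ : ∀ j, σ (eσ.symm j) = j := fun j => eσ.apply_symm_apply j
  set d : Fin 3 → ℝ := fun j => l (eσ.symm j) * C (eσ.symm j) j ^ 2 with hd
  have hdne : ∀ j, C (eσ.symm j) j ≠ 0 := by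
    intro j
    have := hσne (eσ.symm j)
    rwa [happ j] at this
  have hdpos : ∀ j, 0 < d j := by
    intro j
    have h := hdne j
    have : (0:ℝ) < C (eσ.symm j) j ^ 2 := by positivity
    exact mul_pos (hl _) this
  have hdval : ∀ i, d (σ i) = l i := by
    intro i
    have hs : eσ.symm (σ i) = i := eσ.symm_apply_apply i
    have hC1 : C i (σ i) ^ 2 = 1 := by
      rcases hval i (σ i) with h | h | h
      · exact absurd h (hσne i)
      · rw [h]; norm_num
      · rw [h]; norm_num
    simp only [hd]
    rw [hs, hC1, mul_one]
  have hentry : ∀ j k, (C.transpose * Matrix.diagonal l * C) j k = ∑ i, C i j * l i * C i k := by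
    intro j k
    rw [Matrix.mul_apply]
    congr 1
    ext i
    rw [Matrix.mul_diagonal, Matrix.transpose_apply]
  have hD : C.transpose * Matrix.diagonal l * C = Matrix.diagonal d := by
    ext j k
    rw [hentry, Matrix.diagonal_apply]
    rw [Finset.sum_eq_single (eσ.symm j)]
    · by_cases h : j = k
      · subst h
        rw [if_pos rfl]
        simp only [hd]
        ring
      · rw [if_neg h]
        have : C (eσ.symm j) k = 0 := hzero _ _ (by rw [happ]; exact fun hk => h hk.symm)
        rw [this, mul_zero]
    · intro i _ hi
      have : C i j = 0 := hzero _ _ (by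
        intro h
        apply hi
        have h' : eσ i = j := h.symm
        rw [← h', Equiv.symm_apply_apply])
      rw [this]; ring
    · intro h; exact absurd (Finset.mem_univ _) h
  constructor
  · exact ⟨d, hdpos, hD⟩
  · have invdiag : ∀ v : Fin 3 → ℝ, (∀ i, v i ≠ 0) →
        (Matrix.diagonal v)⁻¹ = Matrix.diagonal (fun i => (v i)⁻¹) := by
      intro v hv
      apply Matrix.inv_eq_right_inv
      rw [Matrix.diagonal_mul_diagonal]
      have hfun : (fun i => v i * (v i)⁻¹) = fun _ => (1:ℝ) :=
        funext fun i => mul_inv_cancel₀ (hv i)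
      rw [hfun]
      exact Matrix.diagonal_one
    rw [hD, Matrix.diagonal_mul_diagonal, Matrix.diagonal_mul_diagonal,
      invdiag _ (fun i => (h₂ i).ne'),
      invdiag _ (fun i => (mul_pos (hdpos i) (h₂ i)).ne')]
    ext i j
    rw [Matrix.mul_diagonal, Matrix.mul_diagonal, Matrix.diagonal_mul, Matrix.diagonal_mul]
    by_cases h : C i j = 0
    · rw [h]; ring
    · have hj : j = σ i := (hσ i).2 j h
      have hdj : d j = l i := hj ▸ hdval i
      rw [hdj]
      have hli := (hl i).ne'
      have hs2 := (h₂ j).ne'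
      field_simp
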